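/- Let M = {m_1, …, m_k} ⊆ 𝓜_n be a nonempty finite set of finite metric spaces, put r = smt(M,𝓜), d = max_i diam m_i, d̂ = 2r + d + 2, and let N be the total number of points in the disjoint union m_1 ⊔ ⋯ ⊔ m_k. Then smt(M, 𝓜) = smt(M, 𝓜_N(d̂)): the infimum of lengths of connected graphs connecting M in the whole Gromov–Hausdorff space 𝓜 equals the corresponding infimum taken over graphs all of whose vertices lie in 𝓜_N(d̂). -/

import Mathlib

/-- A (simple) graph on a set `X`: a finite vertex set `verts ⊆ X` together with a finite
set of edges, each edge being a 2-element subset of `verts`. -/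
structure GraphOn (X : Type*) where
  verts : Finset X
  edges : Finset (Sym2 X)
  mem_verts_of_mem_edges : ∀ e ∈ edges, ∀ x ∈ e, x ∈ verts
  not_isDiag : ∀ e ∈ edges, ¬ e.IsDiag

/-- Two points are adjacent in `G` if they form an edge of `G`. -/
def GraphOn.Adj {X : Type*} (G : GraphOn X) (x y : X) : Prop := s(x, y) ∈ G.edges

/-- A graph on `X` is connected if its vertex set is nonempty and any two of its vertices
are joined by a path of edges. -/
def GraphOn.IsConnected {X : Type*} (G : GraphOn X) : Prop :=
  G.verts.Nonempty ∧ ∀ x ∈ G.verts, ∀ y ∈ G.verts, Relation.ReflTransGen G.Adj x y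

/-- A graph on `X` is acyclic if it contains no cycle, i.e. no injective circular sequence
of at least three vertices with consecutive members adjacent. -/
def GraphOn.IsAcyclic {X : Type*} (G : GraphOn X) : Prop :=
  ¬ ∃ (k : ℕ) (v : ZMod k → X), 3 ≤ k ∧ Function.Injective v ∧ ∀ i, G.Adj (v i) (v (i + 1))

/-- A tree on `X` is a connected acyclic graph on `X`. -/
def GraphOn.IsTree {X : Type*} (G : GraphOn X) : Prop := G.IsConnected ∧ G.IsAcyclic

/-- The length of a graph on a metric space: the sum of the lengths (distances between
endpoints) of all its edges. -/
noncomputable def GraphOn.length {X : Type*} [MetricSpace X] (G : GraphOn X) : ℝ :=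
  ∑ e ∈ G.edges, Sym2.lift ⟨fun x y => dist x y, fun _ _ => dist_comm _ _⟩ e

/-- A graph `G` on `X` connects a finite set `M ⊆ X` if `G` is connected and all points of `M`
are vertices of `G`. -/
def GraphOn.Connects {X : Type*} (G : GraphOn X) (M : Finset X) : Prop :=
  G.IsConnected ∧ ∀ m ∈ M, m ∈ G.verts

/-- The length of a Steiner minimal tree on a finite subset `M` of a metric space `X`:
the infimum of lengths of connected graphs on `X` connecting `M`. -/
noncomputable def smt (X : Type*) [MetricSpace X] (M : Finset X) : ℝ :=
  sInf {l : ℝ | ∃ G : GraphOn X, G.Connects M ∧ l = G.length}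

open GromovHausdorff Metric Set Relation

section Helpers

noncomputable def len {Y : Type*} [MetricSpace Y] : Sym2 Y → ℝ :=
  Sym2.lift ⟨fun x y => dist x y, fun _ _ => dist_comm _ _⟩

lemma len_nonneg {Y : Type*} [MetricSpace Y] (e : Sym2 Y) : 0 ≤ len e := by
  induction e using Sym2.ind with
  | _ x y => simpa [len] using dist_nonneg

lemma len_mk {Y : Type*} [MetricSpace Y] (x y : Y) : len s(x, y) = dist x y := rfl

lemma length_eq {Y : Type*} [MetricSpace Y] (G : GraphOn Y) :
    G.length = ∑ e ∈ G.edges, len e := rfl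

lemma length_nonneg {Y : Type*} [MetricSpace Y] (G : GraphOn Y) : 0 ≤ G.length := by
  rw [length_eq]
  exact Finset.sum_nonneg fun e _ => len_nonneg e

lemma rtg_map {α β : Type*} {r : α → α → Prop} {r' : β → β → Prop} (F : α → β)
    (h : ∀ x y, r x y → F x = F y ∨ r' (F x) (F y)) {a b : α}
    (hab : Relation.ReflTransGen r a b) : Relation.ReflTransGen r' (F a) (F b) := by
  induction hab with
  | refl => exact ReflTransGen.refl
  | @tail b₁ c hab hbc ih =>
    rcases h _ _ hbc with he | hs
    · rw [← he]
      exact ih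
    · exact ih.tail hs

lemma sum_image_le' {α β : Type*} [DecidableEq β] (s : Finset α) (F : α → β) (g : β → ℝ)
    (hg : ∀ b, 0 ≤ g b) : ∑ b ∈ s.image F, g b ≤ ∑ a ∈ s, g (F a) := by
  classical
  induction s using Finset.induction with
  | empty => simp
  | @insert a s ha ih =>
    rw [Finset.image_insert, Finset.sum_insert ha]
    by_cases hFa : F a ∈ s.image F
    · rw [Finset.insert_eq_self.2 hFa]
      exact le_add_of_nonneg_left (hg _) |>.trans (by linarith)
    · rw [Finset.sum_insert hFa]
      exact add_le_add (le_refl _) ih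

end Helpers

section GH

-- correspondence with small distortion

lemma corr_exists (p q : GromovHausdorff.GHSpace) {δ : ℝ} (hδ : 0 < δ) :
    ∃ Rel : p.Rep → q.Rep → Prop,
      (∀ x, ∃ y, Rel x y) ∧ (∀ y, ∃ x, Rel x y) ∧
      (∀ x y x' y', Rel x y → Rel x' y' →
        |dist x x' - dist y y'| ≤ 2 * dist p q + δ) := by
  set X := p.Rep
  set Y := q.Rep
  have hopt : hausdorffDist (range (optimalGHInjl X Y)) (range (optimalGHInjr X Y))
      = dist p q := by
    rw [hausdorffDist_optimal, ghDist, p.toGHSpace_rep, q.toGHSpace_rep]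
  have hne : EMetric.hausdorffEdist (range (optimalGHInjl X Y)) (range (optimalGHInjr X Y)) ≠ ⊤ := by
    apply Metric.hausdorffEdist_ne_top_of_nonempty_of_bounded (range_nonempty _)
      (range_nonempty _)
    · exact (isCompact_range (isometry_optimalGHInjl X Y).continuous).isBounded
    · exact (isCompact_range (isometry_optimalGHInjr X Y).continuous).isBounded
  refine ⟨fun x y => dist (optimalGHInjl X Y x) (optimalGHInjr X Y y) ≤ dist p q + δ / 2,
      ?_, ?_, ?_⟩
  · intro x
    obtain ⟨y', hy', hd⟩ := exists_dist_lt_of_hausdorffDist_lt (r := dist p q + δ / 2)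
      (mem_range_self x) (by rw [hopt]; linarith) hne
    obtain ⟨y, rfl⟩ := hy'
    exact ⟨y, hd.le⟩
  · intro y
    obtain ⟨x', hx', hd⟩ := exists_dist_lt_of_hausdorffDist_lt' (r := dist p q + δ / 2)
      (mem_range_self y) (by rw [hopt]; linarith) hne
    obtain ⟨x, rfl⟩ := hx'
    exact ⟨x, hd.le⟩
  · intro x y x' y' h h'
    have e1 : dist x x' = dist (optimalGHInjl X Y x) (optimalGHInjl X Y x') :=
      ((isometry_optimalGHInjl X Y).dist_eq x x').symm
    have e2 : dist y y' = dist (optimalGHInjr X Y y) (optimalGHInjr X Y y') :=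
      ((isometry_optimalGHInjr X Y).dist_eq y y').symm
    rw [e1, e2, abs_le]
    constructor
    · have := dist_triangle4 (optimalGHInjr X Y y) (optimalGHInjl X Y x)
        (optimalGHInjl X Y x') (optimalGHInjr X Y y')
      rw [dist_comm (optimalGHInjr X Y y) (optimalGHInjl X Y x)] at this
      linarith
    · have := dist_triangle4 (optimalGHInjl X Y x) (optimalGHInjr X Y y)
        (optimalGHInjr X Y y') (optimalGHInjl X Y x')
      rw [dist_comm (optimalGHInjr X Y y') (optimalGHInjl X Y x')] at this
      linarith

-- glue bound
lemma ghDist_le_of_surj {Λ A B : Type*} [Nonempty Λ] [MetricSpace A] [MetricSpace B]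
    [CompactSpace A] [CompactSpace B] [Nonempty A] [Nonempty B]
    (Φ : Λ → A) (Ψ : Λ → B) (hΦ : Function.Surjective Φ) (hΨ : Function.Surjective Ψ)
    {ε : ℝ} (hε : 0 < ε)
    (H : ∀ l m : Λ, |dist (Φ l) (Φ m) - dist (Ψ l) (Ψ m)| ≤ 2 * ε) :
    ghDist A B ≤ ε := by
  letI : MetricSpace (A ⊕ B) := glueMetricApprox Φ Ψ ε hε H
  have hinl : Isometry (Sum.inl : A → A ⊕ B) := Isometry.of_dist_eq fun a b => rfl
  have hinr : Isometry (Sum.inr : B → A ⊕ B) := Isometry.of_dist_eq fun a b => rfl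
  refine le_trans (ghDist_le_hausdorffDist hinl hinr) ?_
  apply hausdorffDist_le_of_mem_dist hε.le
  · rintro _ ⟨a, rfl⟩
    obtain ⟨l, rfl⟩ := hΦ a
    exact ⟨Sum.inr (Ψ l), mem_range_self _,
      le_of_eq (glueDist_glued_points Φ Ψ ε l)⟩
  · rintro _ ⟨b, rfl⟩
    obtain ⟨l, rfl⟩ := hΨ b
    refine ⟨Sum.inl (Φ l), mem_range_self _, ?_⟩
    rw [dist_comm]
    exact le_of_eq (glueDist_glued_points Φ Ψ ε l)

-- diameter comparison
lemma diam_le_diam_add_two_hausdorffDist {γ : Type*} [MetricSpace γ] {s t : Set γ}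
    (hs : IsCompact s) (ht : IsCompact t) (hsne : s.Nonempty) (htne : t.Nonempty) :
    diam s ≤ diam t + 2 * hausdorffDist s t := by
  have hne : EMetric.hausdorffEdist s t ≠ ⊤ :=
    hausdorffEdist_ne_top_of_nonempty_of_bounded hsne htne hs.isBounded ht.isBounded
  refine le_of_forall_pos_le_add fun η hη => ?_
  have hd0 : 0 ≤ diam t := diam_nonneg
  have hh0 : 0 ≤ hausdorffDist s t := hausdorffDist_nonneg
  apply diam_le_of_forall_dist_le (by linarith)
  intro x hx y hy
  obtain ⟨x', hx', hdx⟩ := exists_dist_lt_of_hausdorffDist_lt hx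
    (lt_add_of_pos_right _ (by positivity : (0:ℝ) < η/2)) hne
  obtain ⟨y', hy', hdy⟩ := exists_dist_lt_of_hausdorffDist_lt hy
    (lt_add_of_pos_right _ (by positivity : (0:ℝ) < η/2)) hne
  have h1 : dist x' y' ≤ diam t := dist_le_diam_of_mem ht.isBounded hx' hy'
  have := dist_triangle4 x x' y' y
  rw [dist_comm y' y] at this
  linarith

lemma diam_rep_le (p q : GromovHausdorff.GHSpace) :
    diam (univ : Set p.Rep) ≤ diam (univ : Set q.Rep) + 2 * dist p q := by
  set X := p.Rep
  set Y := q.Rep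
  have hopt : hausdorffDist (range (optimalGHInjl X Y)) (range (optimalGHInjr X Y))
      = dist p q := by
    rw [hausdorffDist_optimal, ghDist, p.toGHSpace_rep, q.toGHSpace_rep]
  have h1 : diam (univ : Set X) = diam (range (optimalGHInjl X Y)) :=
    ((isometry_optimalGHInjl X Y).diam_range).symm
  have h2 : diam (univ : Set Y) = diam (range (optimalGHInjr X Y)) :=
    ((isometry_optimalGHInjr X Y).diam_range).symm
  rw [h1, h2, ← hopt]
  exact diam_le_diam_add_two_hausdorffDist
    (isCompact_range (isometry_optimalGHInjl X Y).continuous)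
    (isCompact_range (isometry_optimalGHInjr X Y).continuous)
    (range_nonempty _) (range_nonempty _)

section Grow

local notation "X" => GromovHausdorff.GHSpace

open scoped Classical in
noncomputable def updF (g : ∀ v : X, v.Rep) (w : X) (pt : w.Rep) : ∀ v : X, v.Rep :=
  fun v => if h : v = w then h.symm ▸ pt else g v

lemma updF_same (g : ∀ v : X, v.Rep) (w : X) (pt : w.Rep) : updF g w pt w = pt := by
  rw [updF, dif_pos rfl]

lemma updF_ne (g : ∀ v : X, v.Rep) (w : X) (pt : w.Rep) {v : X} (h : v ≠ w) :
    updF g w pt v = g v := by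
  rw [updF, dif_neg h]

def GrowInv (G : GraphOn X) (Rel : ∀ u v : X, u.Rep → v.Rep → Prop)
    (V : Finset X) (E : Finset (X × X)) : Prop :=
  (∀ p ∈ E, s(p.1, p.2) ∈ G.edges) ∧
  (∀ p ∈ E, p.1 ∈ V ∧ p.2 ∈ V) ∧
  Set.InjOn (fun p : X × X => s(p.1, p.2)) ↑E ∧
  (∀ x ∈ V, ∀ y ∈ V, ReflTransGen (fun a b => (a, b) ∈ E ∨ (b, a) ∈ E) x y) ∧
  (∀ x ∈ V, ∀ y ∈ V, dist x y ≤ ∑ p ∈ E, dist p.1 p.2) ∧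
  E.card < V.card ∧
  (∀ b ∈ V, ∀ pt : b.Rep, ∃ g : ∀ v : X, v.Rep, g b = pt ∧
    ∀ p ∈ E, Rel p.1 p.2 (g p.1) (g p.2))

lemma frontier_exists (G : GraphOn X) (hG : G.IsConnected) (V : Finset X)
    (hV : V ⊆ G.verts) (x₀ : X) (hx₀ : x₀ ∈ V) (y : X) (hy : y ∈ G.verts) (hyV : y ∉ V) :
    ∃ u ∈ V, ∃ w, w ∈ G.verts ∧ w ∉ V ∧ s(u, w) ∈ G.edges := by
  have hrtg := hG.2 x₀ (hV hx₀) y hy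
  clear hy
  induction hrtg with
  | refl => exact absurd hx₀ hyV
  | @tail b c hab hbc ih =>
    by_cases hb : b ∈ V
    · exact ⟨b, hb, c, G.mem_verts_of_mem_edges _ hbc c (Sym2.mem_mk_right _ _), hyV, hbc⟩
    · exact ih hb

lemma grow_aux (G : GraphOn X) (hG : G.IsConnected)
    (Rel : ∀ u v : X, u.Rep → v.Rep → Prop)
    (hRel1 : ∀ u v x, ∃ y, Rel u v x y) (hRel2 : ∀ u v y, ∃ x, Rel u v x y) :
    ∀ (n : ℕ) (V : Finset X) (E : Finset (X × X)), V.Nonempty → V ⊆ G.verts →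
      GrowInv G Rel V E → G.verts.card ≤ V.card + n →
      ∃ E', GrowInv G Rel G.verts E' := by
  classical
  intro n
  induction n with
  | zero =>
    intro V E _ hsub hinv hcard
    have : V = G.verts := Finset.eq_of_subset_of_card_le hsub (by simpa using hcard)
    exact ⟨E, this ▸ hinv⟩
  | succ n ih =>
    intro V E hne hsub hinv hcard
    by_cases hVG : V = G.verts
    · exact ⟨E, hVG ▸ hinv⟩
    · have hex : ∃ y ∈ G.verts, y ∉ V := by
        by_contra h
        push_neg at h
        exact hVG (Finset.Subset.antisymm hsub h)
      obtain ⟨x₀, hx₀⟩ := hne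
      obtain ⟨y, hyG, hyV⟩ := hex
      obtain ⟨u, hu, w, hwG, hwV, hedge⟩ := frontier_exists G hG V hsub x₀ hx₀ y hyG hyV
      obtain ⟨i1, i2, i3, i4, i5, i6, i7⟩ := hinv
      have huw : u ≠ w := fun h => hwV (h ▸ hu)
      have hnew : (u, w) ∉ E := fun h => hwV (i2 _ h).2
      have hsumE : ∑ p ∈ insert (u, w) E, dist p.1 p.2 = dist u w + ∑ p ∈ E, dist p.1 p.2 :=
        Finset.sum_insert hnew
      have hsum0 : (0:ℝ) ≤ ∑ p ∈ E, dist p.1 p.2 :=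
        Finset.sum_nonneg fun _ _ => dist_nonneg
      refine ih (insert w V) (insert (u, w) E) ⟨w, Finset.mem_insert_self _ _⟩
        (Finset.insert_subset hwG hsub) ⟨?_, ?_, ?_, ?_, ?_, ?_, ?_⟩ ?_
      · intro p hp
        rcases Finset.mem_insert.1 hp with h | h
        · subst h; exact hedge
        · exact i1 p h
      · intro p hp
        rcases Finset.mem_insert.1 hp with h | h
        · subst h
          exact ⟨Finset.mem_insert_of_mem hu, Finset.mem_insert_self _ _⟩
        · exact ⟨Finset.mem_insert_of_mem (i2 p h).1, Finset.mem_insert_of_mem (i2 p h).2⟩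
      · intro p hp q hq heq
        simp only [Finset.coe_insert, Set.mem_insert_iff, Finset.mem_coe] at hp hq
        have key : ∀ q' : X × X, q' ∈ E → ¬ (s(u, w) = s(q'.1, q'.2)) := by
          intro q' hq' hEq
          rcases Sym2.eq_iff.1 hEq with ⟨-, h2⟩ | ⟨-, h2⟩
          · exact hwV (h2 ▸ (i2 q' hq').2)
          · exact hwV (h2 ▸ (i2 q' hq').1)
        simp only at heq
        rcases hp with hp | hp <;> rcases hq with hq | hq
        · rw [hp, hq]
        · exact absurd (by rw [← heq, hp]) (key q hq)
        · exact absurd (by rw [heq, hq]) (key p hp)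
        · exact i3 hp hq heq
      · have hmono : ∀ a b, ((a, b) ∈ E ∨ (b, a) ∈ E) →
            ((a, b) ∈ insert (u, w) E ∨ (b, a) ∈ insert (u, w) E) := by
          intro a b h
          rcases h with h | h
          · exact Or.inl (Finset.mem_insert_of_mem h)
          · exact Or.inr (Finset.mem_insert_of_mem h)
        have hwu : ReflTransGen (fun a b => (a, b) ∈ insert (u, w) E ∨ (b, a) ∈ insert (u, w) E)
            w u := ReflTransGen.single (Or.inr (Finset.mem_insert_self _ _))
        have huw' : ReflTransGen (fun a b => (a, b) ∈ insert (u, w) E ∨ (b, a) ∈ insert (u, w) E)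
            u w := ReflTransGen.single (Or.inl (Finset.mem_insert_self _ _))
        intro x hx y' hy'
        rcases Finset.mem_insert.1 hx with hx | hx <;> rcases Finset.mem_insert.1 hy' with hy2 | hy2
        · rw [hx, hy2]
        · rw [hx]
          exact ReflTransGen.trans hwu (ReflTransGen.mono hmono _ _ (i4 u hu y' hy2))
        · rw [hy2]
          exact ReflTransGen.trans (ReflTransGen.mono hmono _ _ (i4 x hx u hu)) huw'
        · exact ReflTransGen.mono hmono _ _ (i4 x hx y' hy2)
      · intro x hx y' hy'
        rw [hsumE]
        have hd : (0:ℝ) ≤ dist u w := dist_nonneg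
        rcases Finset.mem_insert.1 hx with hx | hx <;> rcases Finset.mem_insert.1 hy' with hy2 | hy2
        · rw [hx, hy2]
          simp only [dist_self]
          positivity
        · rw [hx]
          have h1 := i5 u hu y' hy2
          have htr := dist_triangle w u y'
          have hc : dist w u = dist u w := dist_comm w u
          linarith
        · rw [hy2]
          have h1 := i5 x hx u hu
          have htr := dist_triangle x u w
          linarith
        · have h1 := i5 x hx y' hy2
          linarith
      · rw [Finset.card_insert_of_notMem hnew, Finset.card_insert_of_notMem hwV]
        exact Nat.succ_lt_succ i6
      · intro b hb pt
        rcases Finset.mem_insert.1 hb with hb | hb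
        · subst hb
          obtain ⟨x₁, hx₁⟩ := hRel2 u b pt
          obtain ⟨g, hgu, hgE⟩ := i7 u hu x₁
          refine ⟨updF g b pt, updF_same _ _ _, ?_⟩
          intro p hp
          rcases Finset.mem_insert.1 hp with h | h
          · subst h
            rw [updF_ne _ _ _ huw, updF_same, hgu]
            exact hx₁
          · have h1 := (i2 p h).1
            have h2 := (i2 p h).2
            rw [updF_ne _ _ _ (ne_of_mem_of_not_mem h1 hwV), updF_ne _ _ _ (ne_of_mem_of_not_mem h2 hwV)]
            exact hgE p h
        · obtain ⟨g, hgb, hgE⟩ := i7 b hb pt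
          obtain ⟨y₁, hy₁⟩ := hRel1 u w (g u)
          refine ⟨updF g w y₁, ?_, ?_⟩
          · rw [updF_ne _ _ _ (ne_of_mem_of_not_mem hb hwV)]
            exact hgb
          · intro p hp
            rcases Finset.mem_insert.1 hp with h | h
            · subst h
              rw [updF_ne _ _ _ huw, updF_same]
              exact hy₁
            · have h1 := (i2 p h).1
              have h2 := (i2 p h).2
              rw [updF_ne _ _ _ (ne_of_mem_of_not_mem h1 hwV),
                updF_ne _ _ _ (ne_of_mem_of_not_mem h2 hwV)]
              exact hgE p h
      · rw [Finset.card_insert_of_notMem hwV]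
        omega

lemma grow (G : GraphOn X) (hG : G.IsConnected)
    (Rel : ∀ u v : X, u.Rep → v.Rep → Prop)
    (hRel1 : ∀ u v x, ∃ y, Rel u v x y) (hRel2 : ∀ u v y, ∃ x, Rel u v x y) :
    ∃ E : Finset (X × X), GrowInv G Rel G.verts E := by
  classical
  obtain ⟨x₀, hx₀⟩ := hG.1
  have hinv : GrowInv G Rel {x₀} (∅ : Finset (X × X)) := by
    refine ⟨by simp, by simp, by simp, ?_, ?_, by simp, ?_⟩
    · intro x hx y hy
      rw [Finset.mem_singleton] at hx hy
      rw [hx, hy]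
    · intro x hx y hy
      rw [Finset.mem_singleton] at hx hy
      simp [hx, hy]
    · intro b hb pt
      exact ⟨updF (fun v => Classical.arbitrary _) b pt, updF_same _ _ _, by simp⟩
  exact grow_aux G hG Rel hRel1 hRel2 G.verts.card {x₀} ∅ ⟨x₀, Finset.mem_singleton_self _⟩
    (Finset.singleton_subset_iff.2 hx₀) hinv (by simp)

end Grow

end GH

section Main

open GromovHausdorff

local notation "X" => GromovHausdorff.GHSpace

lemma main_step (M : Finset X) (hM : M.Nonempty)
    (hfin : ∀ m ∈ M, Finite (GromovHausdorff.GHSpace.Rep m))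
    (N : ℕ) (hN : (N : ℕ) = ∑ m ∈ M, Nat.card (GromovHausdorff.GHSpace.Rep m))
    (G : GraphOn X) (hGM : G.Connects M) {δ : ℝ} (hδ : 0 < δ) :
    ∃ G' : GraphOn X, G'.Connects M ∧
      (∀ v ∈ G'.verts, (Finite v.Rep ∧ Nat.card v.Rep ≤ N) ∧
        Metric.diam (Set.univ : Set v.Rep) ≤
          (M.sup' hM fun m => Metric.diam (Set.univ : Set m.Rep)) + 2 * G.length) ∧
      G'.length ≤ G.length + G.verts.card * δ := by
  classical
  obtain ⟨hGc, hGMsub⟩ := hGM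
  -- correspondences
  choose Rel hR1 hR2 hR3 using fun u v : X => corr_exists u v hδ
  obtain ⟨E, hInv⟩ := grow G hGc Rel hR1 hR2
  unfold GrowInv at hInv
  obtain ⟨i1, i2, i3, i4, i5, i6, i7⟩ := hInv
  -- labels
  haveI hfin' : ∀ m : {x // x ∈ M}, Finite (GromovHausdorff.GHSpace.Rep m.1) :=
    fun m => hfin m.1 m.2
  set Λ := Σ m : {x // x ∈ M}, GromovHausdorff.GHSpace.Rep m.1 with hΛ
  haveI : Nonempty Λ := ⟨⟨⟨hM.choose, hM.choose_spec⟩, Classical.arbitrary _⟩⟩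
  haveI hft : ∀ m : {x // x ∈ M}, Fintype ((↑m : X).Rep) := fun m => Fintype.ofFinite _
  letI : Fintype Λ := inferInstanceAs (Fintype ((m : {x // x ∈ M}) × (↑m : X).Rep))
  -- the assignments
  have hg0 : ∀ l : Λ, ∃ g : ∀ v : X, v.Rep, g l.1.1 = l.2 ∧
      ∀ p ∈ E, Rel p.1 p.2 (g p.1) (g p.2) :=
    fun l => i7 l.1.1 (hGMsub l.1.1 l.1.2) l.2
  choose g hgbase hgedge using hg0
  -- the finite replacement spaces
  set Z : ∀ v : X, Finset v.Rep := fun v => Finset.image (fun l => g l v) Finset.univ with hZ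
  haveI hZne : ∀ v : X, Nonempty ↥(Z v) := fun v =>
    ⟨⟨g (Classical.arbitrary Λ) v, Finset.mem_image_of_mem _ (Finset.mem_univ _)⟩⟩
  set f : X → X := fun v => toGHSpace ↥(Z v) with hf
  have hfv : ∀ v : X, Nonempty ((f v).Rep ≃ᵢ ↥(Z v)) := fun v =>
    toGHSpace_eq_toGHSpace_iff_isometryEquiv.1 (by rw [GHSpace.toGHSpace_rep])
  -- boundary vertices are unchanged
  have hfm : ∀ m ∈ M, f m = m := by
    intro m hm
    have hsurj : ∀ x : GromovHausdorff.GHSpace.Rep m, x ∈ Z m := fun x =>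
      Finset.mem_image.2 ⟨⟨⟨m, hm⟩, x⟩, Finset.mem_univ _, hgbase ⟨⟨m, hm⟩, x⟩⟩
    have e : ↥(Z m) ≃ᵢ GromovHausdorff.GHSpace.Rep m :=
      ⟨Equiv.ofBijective (fun z => z.1)
        ⟨fun a b h => Subtype.ext h, fun x => ⟨⟨x, hsurj x⟩, rfl⟩⟩, fun a b => rfl⟩
    calc f m = toGHSpace (GromovHausdorff.GHSpace.Rep m) :=
          toGHSpace_eq_toGHSpace_iff_isometryEquiv.2 ⟨e⟩
      _ = m := GHSpace.toGHSpace_rep m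
  -- edge estimates
  have hedist : ∀ p ∈ E, dist (f p.1) (f p.2) ≤ dist p.1 p.2 + δ := by
    intro p hp
    set A := ↥(Z p.1)
    set B := ↥(Z p.2)
    have hd0 : (0:ℝ) ≤ dist p.1 p.2 := dist_nonneg
    set Φ : Λ → A := fun l => ⟨g l p.1, Finset.mem_image_of_mem _ (Finset.mem_univ _)⟩
    set Ψ : Λ → B := fun l => ⟨g l p.2, Finset.mem_image_of_mem _ (Finset.mem_univ _)⟩
    have hΦ : Function.Surjective Φ := by
      rintro ⟨x, hx⟩
      obtain ⟨l, -, hlx⟩ := Finset.mem_image.1 hx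
      exact ⟨l, Subtype.ext hlx⟩
    have hΨ : Function.Surjective Ψ := by
      rintro ⟨x, hx⟩
      obtain ⟨l, -, hlx⟩ := Finset.mem_image.1 hx
      exact ⟨l, Subtype.ext hlx⟩
    have H : ∀ l m' : Λ, |dist (Φ l) (Φ m') - dist (Ψ l) (Ψ m')| ≤
        2 * (dist p.1 p.2 + δ / 2) := by
      intro l m'
      rw [Subtype.dist_eq, Subtype.dist_eq]
      have := hR3 p.1 p.2 (g l p.1) (g l p.2) (g m' p.1) (g m' p.2)
        (hgedge l p hp) (hgedge m' p hp)
      calc |dist (g l p.1) (g m' p.1) - dist (g l p.2) (g m' p.2)|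
          ≤ 2 * dist p.1 p.2 + δ := this
        _ = 2 * (dist p.1 p.2 + δ / 2) := by ring
    have hgh := ghDist_le_of_surj Φ Ψ hΦ hΨ (by positivity) H
    have : dist (f p.1) (f p.2) = ghDist A B := rfl
    rw [this]
    linarith
  -- sum of tree-edge lengths is at most the length of G
  have hEsum : ∑ p ∈ E, dist p.1 p.2 ≤ G.length := by
    have h1 : ∑ e ∈ E.image (fun p : X × X => s(p.1, p.2)), len e
        = ∑ p ∈ E, dist p.1 p.2 := by
      rw [Finset.sum_image (fun x hx y hy h => i3 hx hy h)]
      exact Finset.sum_congr rfl fun p _ => len_mk _ _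
    rw [← h1, length_eq]
    refine Finset.sum_le_sum_of_subset_of_nonneg ?_ (fun e _ _ => len_nonneg e)
    intro e he
    obtain ⟨p, hp, rfl⟩ := Finset.mem_image.1 he
    exact i1 p hp
  obtain ⟨m₀, hm₀⟩ := hM.exists_mem
  have hm₀v : m₀ ∈ G.verts := hGMsub m₀ hm₀
  have hdistb : ∀ v ∈ G.verts, dist v m₀ ≤ G.length :=
    fun v hv => (i5 v hv m₀ hm₀v).trans hEsum
  -- the new graph
  refine ⟨⟨G.verts.image f,
      (E.image (fun p : X × X => s(f p.1, f p.2))).filter (fun e => ¬ e.IsDiag),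
      ?_, fun e he => (Finset.mem_filter.1 he).2⟩, ⟨⟨hGc.1.image f, ?_⟩, ?_⟩, ?_, ?_⟩
  · -- mem_verts_of_mem_edges
    intro e he x hxe
    obtain ⟨p, hp, rfl⟩ := Finset.mem_image.1 (Finset.mem_filter.1 he).1
    rcases Sym2.mem_iff.1 hxe with h | h
    · exact h ▸ Finset.mem_image_of_mem f (i2 p hp).1
    · exact h ▸ Finset.mem_image_of_mem f (i2 p hp).2
  · -- connectivity
    intro x hx y hy
    obtain ⟨a, haG, rfl⟩ := Finset.mem_image.1 hx
    obtain ⟨b, hbG, rfl⟩ := Finset.mem_image.1 hy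
    refine rtg_map f ?_ (i4 a haG b hbG)
    intro a' b' hab
    by_cases hdg : f a' = f b'
    · exact Or.inl hdg
    · refine Or.inr (Finset.mem_filter.2 ⟨?_, by rwa [Sym2.mk_isDiag_iff]⟩)
      rcases hab with h | h
      · exact Finset.mem_image_of_mem _ h
      · rw [Sym2.eq_swap]
        exact Finset.mem_image_of_mem (fun p : X × X => s(f p.1, f p.2)) h
  · -- M ⊆ verts
    intro m hm
    have hmem := Finset.mem_image_of_mem f (hGMsub m hm)
    rwa [hfm m hm] at hmem
  · -- vertex conditions
    intro v hv
    obtain ⟨a, haG, rfl⟩ := Finset.mem_image.1 hv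
    obtain ⟨e⟩ := hfv a
    haveI : Finite ((f a).Rep) := Finite.of_equiv _ e.toEquiv.symm
    have hcard : Nat.card ((f a).Rep) ≤ N := by
      have h1 : Nat.card ((f a).Rep) = Nat.card ↥(Z a) := Nat.card_congr e.toEquiv
      have h2 : Nat.card ↥(Z a) = (Z a).card :=
        Nat.card_eq_fintype_card.trans (Fintype.card_coe _)
      have h3 : (Z a).card ≤ Fintype.card Λ := by
        simpa [Finset.card_univ] using Finset.card_image_le
          (s := (Finset.univ : Finset Λ)) (f := fun l => g l a)
      have h4 : Fintype.card Λ = N := by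
        rw [hN]
        rw [show Fintype.card Λ = ∑ m : {x // x ∈ M}, Fintype.card ((↑m : X).Rep) from
          Fintype.card_sigma]
        rw [← Finset.sum_coe_sort M (fun m => Nat.card (GromovHausdorff.GHSpace.Rep m))]
        exact Finset.sum_congr rfl fun m _ => Nat.card_eq_fintype_card.symm
      omega
    refine ⟨⟨inferInstance, hcard⟩, ?_⟩
    have hd1 : Metric.diam (Set.univ : Set ((f a).Rep)) = Metric.diam (Set.univ : Set ↥(Z a)) :=
      e.diam_univ
    have hd2 : Metric.diam (Set.univ : Set ↥(Z a)) ≤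
        Metric.diam (Set.univ : Set (GromovHausdorff.GHSpace.Rep a)) := by
      have hr : Metric.diam (Set.range (Subtype.val : ↥(Z a) → _))
          = Metric.diam (Set.univ : Set ↥(Z a)) := isometry_subtype_coe.diam_range
      rw [← hr]
      exact Metric.diam_mono (Set.subset_univ _) isCompact_univ.isBounded
    have hd3 := diam_rep_le a m₀
    have hd4 : Metric.diam (Set.univ : Set (GromovHausdorff.GHSpace.Rep m₀)) ≤
        M.sup' hM fun m => Metric.diam (Set.univ : Set m.Rep) :=
      Finset.le_sup' (fun m => Metric.diam (Set.univ : Set (GromovHausdorff.GHSpace.Rep m))) hm₀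
    have hd5 := hdistb a haG
    rw [hd1]
    have hd6 : (0:ℝ) ≤ dist a m₀ := dist_nonneg
    linarith
  · -- length bound
    have hl1 : ∑ e ∈ (E.image (fun p : X × X => s(f p.1, f p.2))).filter (fun e => ¬ e.IsDiag),
        len e ≤ ∑ e ∈ E.image (fun p : X × X => s(f p.1, f p.2)), len e :=
      Finset.sum_le_sum_of_subset_of_nonneg (Finset.filter_subset _ _)
        (fun e _ _ => len_nonneg e)
    have hl2 : ∑ e ∈ E.image (fun p : X × X => s(f p.1, f p.2)), len e
        ≤ ∑ p ∈ E, len s(f p.1, f p.2) :=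
      sum_image_le' E _ len len_nonneg
    have hl3 : ∑ p ∈ E, len s(f p.1, f p.2) ≤ ∑ p ∈ E, (dist p.1 p.2 + δ) :=
      Finset.sum_le_sum fun p hp => by rw [len_mk]; exact hedist p hp
    have hl4 : ∑ p ∈ E, (dist p.1 p.2 + δ) = (∑ p ∈ E, dist p.1 p.2) + E.card * δ := by
      rw [Finset.sum_add_distrib, Finset.sum_const, nsmul_eq_mul]
    have hl5 : (E.card : ℝ) * δ ≤ G.verts.card * δ := by
      have : (E.card : ℝ) ≤ G.verts.card := by exact_mod_cast i6.le
      exact mul_le_mul_of_nonneg_right this hδ.le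
    rw [length_eq]
    dsimp only
    rw [length_eq] at hEsum ⊢
    calc ∑ e ∈ (E.image (fun p : X × X => s(f p.1, f p.2))).filter (fun e => ¬ e.IsDiag), len e
        ≤ ∑ p ∈ E, (dist p.1 p.2 + δ) := le_trans (le_trans hl1 hl2) hl3
      _ ≤ G.length + G.verts.card * δ := by
          rw [hl4]
          exact add_le_add hEsum hl5

end Main


section Complete

open Classical in
noncomputable def completeG {Y : Type*} (M : Finset Y) : GraphOn Y where
  verts := M
  edges := ((M ×ˢ M).filter fun p => p.1 ≠ p.2).image fun p => s(p.1, p.2)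
  mem_verts_of_mem_edges := by
    intro e he x hxe
    obtain ⟨p, hp, rfl⟩ := Finset.mem_image.1 he
    have hp' := Finset.mem_product.1 (Finset.mem_filter.1 hp).1
    rcases Sym2.mem_iff.1 hxe with h | h
    · exact h ▸ hp'.1
    · exact h ▸ hp'.2
  not_isDiag := by
    intro e he
    obtain ⟨p, hp, rfl⟩ := Finset.mem_image.1 he
    rw [Sym2.isDiag_iff_proj_eq]
    exact (Finset.mem_filter.1 hp).2

lemma completeG_connects {Y : Type*} (M : Finset Y) (hM : M.Nonempty) :
    (completeG M).Connects M := by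
  classical
  refine ⟨⟨hM, ?_⟩, fun m hm => hm⟩
  intro x hx y hy
  by_cases hxy : x = y
  · rw [hxy]
  · refine Relation.ReflTransGen.single ?_
    show s(x, y) ∈ (completeG M).edges
    exact Finset.mem_image.2 ⟨(x, y),
      Finset.mem_filter.2 ⟨Finset.mem_product.2 ⟨hx, hy⟩, hxy⟩, rfl⟩

end Complete


/-- Let `M ⊆ 𝓜_n` be a nonempty finite set of (isometry classes of) finite metric spaces,
`r = smt(M,𝓜)`, `d = max_{m ∈ M} diam m`, `d̂ = 2r + d + 2`, and let `N` be the total number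
of points of the disjoint union of the members of `M`. Then `smt(M,𝓜) = smt(M,𝓜_N(d̂))`:
the infimum of lengths of connected graphs connecting `M` in `𝓜` equals the corresponding
infimum over graphs all of whose vertices have at most `N` points and diameter at most `d̂`. -/
theorem smt_eq_smt_in_M_N_dhat (n : ℕ)
    (M : Finset GromovHausdorff.GHSpace) (hM : M.Nonempty)
    (hfin : ∀ m ∈ M, Finite m.Rep ∧ Nat.card m.Rep ≤ n)
    (r d dhat : ℝ) (N : ℕ)
    (hr : r = smt GromovHausdorff.GHSpace M)
    (hd : d = M.sup' hM fun m => Metric.diam (Set.univ : Set m.Rep))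
    (hdhat : dhat = 2 * r + d + 2)
    (hN : N = ∑ m ∈ M, Nat.card m.Rep) :
    smt GromovHausdorff.GHSpace M =
      sInf {l : ℝ | ∃ G : GraphOn GromovHausdorff.GHSpace, G.Connects M ∧
        (∀ v ∈ G.verts, (Finite v.Rep ∧ Nat.card v.Rep ≤ N) ∧
          Metric.diam (Set.univ : Set v.Rep) ≤ dhat) ∧
        l = G.length} := by
  classical
  set S : Set ℝ := {l : ℝ | ∃ G : GraphOn GromovHausdorff.GHSpace, G.Connects M ∧ l = G.length} with hS
  set S' : Set ℝ := {l : ℝ | ∃ G : GraphOn GromovHausdorff.GHSpace, G.Connects M ∧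
      (∀ v ∈ G.verts, (Finite v.Rep ∧ Nat.card v.Rep ≤ N) ∧
        Metric.diam (Set.univ : Set v.Rep) ≤ dhat) ∧
      l = G.length} with hS'
  have hsub : S' ⊆ S := by
    rintro l ⟨G, hc, -, hl⟩
    exact ⟨G, hc, hl⟩
  have hGMc := completeG_connects M hM
  have hSne : S.Nonempty := ⟨(completeG M).length, completeG M, hGMc, rfl⟩
  have hSbdd : BddBelow S := by
    refine ⟨0, ?_⟩
    rintro l ⟨G, -, rfl⟩
    exact length_nonneg G
  have hsmt : smt GromovHausdorff.GHSpace M = sInf S := by rw [hS]; rfl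
  have hr0 : 0 ≤ r := by
    rw [hr, hsmt]
    apply Real.sInf_nonneg
    rintro l ⟨G, -, rfl⟩
    exact length_nonneg G
  have hddhat : d ≤ dhat := by rw [hdhat]; linarith
  have hS'ne : S'.Nonempty := by
    refine ⟨(completeG M).length, completeG M, hGMc, ?_, rfl⟩
    intro v hv
    have hvM : v ∈ M := hv
    refine ⟨⟨(hfin v hvM).1, ?_⟩, ?_⟩
    · rw [hN]
      exact Finset.single_le_sum (f := fun m : GromovHausdorff.GHSpace => Nat.card m.Rep)
        (fun i _ => Nat.zero_le _) hvM
    · refine le_trans ?_ hddhat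
      rw [hd]
      exact Finset.le_sup' (fun m : GromovHausdorff.GHSpace => Metric.diam (Set.univ : Set m.Rep)) hvM
  have ineq1 : sInf S ≤ sInf S' := csInf_le_csInf hSbdd hS'ne hsub
  have ineq2 : sInf S' ≤ sInf S := by
    apply le_of_forall_pos_le_add
    intro ε hε
    set ε₀ := min ε 1 with hε₀def
    have hε₀ : 0 < ε₀ := lt_min hε one_pos
    have hε₀le : ε₀ ≤ 1 := min_le_right _ _
    have hε₀leε : ε₀ ≤ ε := min_le_left _ _
    obtain ⟨l, hlS, hllt⟩ := exists_lt_of_csInf_lt hSne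
      (show sInf S < sInf S + ε₀ / 2 by linarith)
    obtain ⟨G, hGconn, rfl⟩ := hlS
    set δ := ε₀ / (2 * (G.verts.card + 1)) with hδdef
    have hδ : 0 < δ := by positivity
    obtain ⟨G', hG'conn, hG'verts, hG'len⟩ :=
      main_step M hM (fun m hm => (hfin m hm).1) N hN G hGconn hδ
    have hcard : (G.verts.card : ℝ) * δ ≤ ε₀ / 2 := by
      have h1 : ((G.verts.card : ℝ) + 1) * δ = ε₀ / 2 := by
        rw [hδdef]
        field_simp
      nlinarith [hδ.le]
    have hGlen : G.length < smt GromovHausdorff.GHSpace M + ε₀ / 2 := by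
      rw [hsmt]; exact hllt
    have hrG : G.length < r + ε₀ / 2 := by rw [hr]; exact hGlen
    have hmem : G'.length ∈ S' := by
      refine ⟨G', hG'conn, ?_, rfl⟩
      intro v hv
      obtain ⟨hfc, hdiam⟩ := hG'verts v hv
      refine ⟨hfc, ?_⟩
      refine hdiam.trans ?_
      rw [hdhat, hd]
      have h0 : 0 ≤ G.length := length_nonneg G
      linarith
    calc sInf S' ≤ G'.length := csInf_le ⟨0, by rintro l ⟨G₁, -, -, rfl⟩; exact length_nonneg G₁⟩ hmem
      _ ≤ G.length + G.verts.card * δ := hG'len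
      _ ≤ G.length + ε₀ / 2 := by linarith
      _ ≤ sInf S + ε := by rw [hsmt] at hGlen; linarith
  rw [hsmt]
  exact le_antisymm ineq1 ineq2
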